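/- Let n ≥ 1 be a natural number and let ℓ₁ ≥ ℓ₂ > 0 be real numbers with relative eigengap δ = (ℓ₁ − ℓ₂)/ℓ₁. Then 4/n + Real.log ℓ₁ + Real.log ℓ₂ − 2·Real.log((ℓ₁ + ℓ₂)/2) > 0 if and only if δ < 2·(1 − Real.exp(4/n) + Real.exp(2/n)·Real.sqrt(Real.exp(4/n) − 1)). -/

import Mathlib

theorem aic_releigengap_threshold (n : ℕ) (hn : 1 ≤ n)
    (ℓ₁ ℓ₂ : ℝ) (h12 : ℓ₂ ≤ ℓ₁) (h2pos : 0 < ℓ₂)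
    (δ : ℝ) (hδ : δ = (ℓ₁ - ℓ₂) / ℓ₁) :
    0 < 4 / n + Real.log ℓ₁ + Real.log ℓ₂ - 2 * Real.log ((ℓ₁ + ℓ₂) / 2) ↔
      δ < 2 * (1 - Real.exp (4 / n) +
        Real.exp (2 / n) * Real.sqrt (Real.exp (4 / n) - 1)) := by
  have h1pos : 0 < ℓ₁ := lt_of_lt_of_le h2pos h12
  have hn' : (0:ℝ) < (n:ℝ) := by exact_mod_cast hn
  set c := Real.exp (2 / n) with hc
  have hcpos : 0 < c := Real.exp_pos _
  have hE : Real.exp (4 / (n:ℝ)) = c ^ 2 := by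
    rw [hc, sq, ← Real.exp_add]
    congr 1
    field_simp
    ring
  have hc1 : 1 < c := by
    rw [hc]
    have := Real.exp_lt_exp.mpr (show (0:ℝ) < 2 / n by positivity)
    simpa using this
  have hδ0 : 0 ≤ δ := by
    rw [hδ]; apply div_nonneg (by linarith) h1pos.le
  have hℓ2 : ℓ₂ = ℓ₁ * (1 - δ) := by
    rw [hδ]; field_simp; ring
  set s := Real.sqrt (c ^ 2 - 1) with hsdef
  have hs0 : 0 < s := Real.sqrt_pos.mpr (by nlinarith)
  have hs2 : s ^ 2 = c ^ 2 - 1 := Real.sq_sqrt (by nlinarith)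
  have hm : 0 < (ℓ₁ + ℓ₂) / 2 := by linarith
  have hlog : (0 < 4 / n + Real.log ℓ₁ + Real.log ℓ₂
      - 2 * Real.log ((ℓ₁ + ℓ₂) / 2)) ↔
      ((ℓ₁ + ℓ₂) / 2) ^ 2 < c ^ 2 * (ℓ₁ * ℓ₂) := by
    have e1 : Real.log (((ℓ₁ + ℓ₂) / 2) ^ 2) = 2 * Real.log ((ℓ₁ + ℓ₂) / 2) := by
      rw [Real.log_pow]; push_cast; ring
    have e2 : Real.log (c ^ 2 * (ℓ₁ * ℓ₂)) = 4 / n + Real.log ℓ₁ + Real.log ℓ₂ := by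
      rw [Real.log_mul (by positivity) (by positivity),
        Real.log_mul h1pos.ne' h2pos.ne', ← hE, Real.log_exp]
      ring
    have base := Real.log_lt_log_iff (x := ((ℓ₁ + ℓ₂) / 2) ^ 2)
      (y := c ^ 2 * (ℓ₁ * ℓ₂)) (by positivity) (by positivity)
    rw [e1, e2] at base
    rw [← base]
    constructor <;> intro h <;> linarith
  rw [hlog, hE, ← hsdef]
  have scale : ((ℓ₁ + ℓ₂) / 2) ^ 2 < c ^ 2 * (ℓ₁ * ℓ₂) ↔
      (2 - δ) ^ 2 < 4 * c ^ 2 * (1 - δ) := by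
    rw [hℓ2,
      show ((ℓ₁ + ℓ₁ * (1 - δ)) / 2) ^ 2 = (ℓ₁ ^ 2 / 4) * ((2 - δ) ^ 2) by ring,
      show c ^ 2 * (ℓ₁ * (ℓ₁ * (1 - δ))) = (ℓ₁ ^ 2 / 4) * (4 * c ^ 2 * (1 - δ)) by ring]
    exact mul_lt_mul_iff_right₀ (by positivity)
  rw [scale]
  have factored : (2 - δ) ^ 2 - 4 * c ^ 2 * (1 - δ) =
      (δ - 2 * (1 - c ^ 2 + c * s)) * (δ - (2 * (1 - c ^ 2) - 2 * c * s)) := by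
    linear_combination (4 * c ^ 2) * hs2
  have hlow : 0 < δ - (2 * (1 - c ^ 2) - 2 * c * s) := by
    nlinarith [mul_pos hcpos hs0]
  constructor
  · intro h
    nlinarith [factored, hlow]
  · intro h
    nlinarith [factored, mul_pos (sub_pos.mpr h) hlow]
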